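/- Let 2 < p < q < r be primes and let k ≥ 0 be an integer. For an integer m, let f_k(m) denote the unique integer with 0 ≤ f_k(m) < pq and r·f_k(m) ≡ k - m (mod pq). Then ∑_{m=0}^{p-1} a_{pq}(f_k(m)) = ∑_{m=0}^{p-1} a_{pq}(f_k(m+q)). -/

import Mathlib

open Polynomial

/-- `cyclCoeff n k` is the coefficient of `x^k` in the `n`-th cyclotomic polynomial over `ℤ`. -/
noncomputable def cyclCoeff (n k : ℕ) : ℤ := (Polynomial.cyclotomic n ℤ).coeff k

section Aux

open AddMonoidAlgebra

/-- The natural map `ℤ[X] → ℤ[ZMod N]` sending `X` to the group element `1`. -/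
noncomputable def piGA (N : ℕ) : ℤ[X] →ₐ[ℤ] AddMonoidAlgebra ℤ (ZMod N) :=
  aeval (AddMonoidAlgebra.single (1 : ZMod N) (1 : ℤ))

lemma piGA_X_pow (N n : ℕ) :
    piGA N (X ^ n) = AddMonoidAlgebra.single ((n : ZMod N)) (1 : ℤ) := by
  rw [piGA, map_pow, aeval_X, AddMonoidAlgebra.single_pow, one_pow]
  congr 1
  simp [nsmul_eq_mul]

lemma piGA_dvd (N : ℕ) (f : ℤ[X]) (hf : (X ^ N - 1 : ℤ[X]) ∣ f) : piGA N f = 0 := by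
  obtain ⟨g, rfl⟩ := hf
  rw [map_mul, map_sub, piGA_X_pow, map_one]
  have : ((N : ZMod N)) = 0 := by simp
  rw [this]
  rw [show (AddMonoidAlgebra.single (0 : ZMod N) (1 : ℤ)) = 1 from rfl]
  simp

lemma piGA_apply (N : ℕ) [NeZero N] (f : ℤ[X]) (hf : f.natDegree < N) (t : ZMod N) :
    (piGA N f).coeff t = f.coeff t.val := by
  rw [piGA, aeval_eq_sum_range]
  have hsum : (∑ i ∈ Finset.range (f.natDegree + 1),
      f.coeff i • AddMonoidAlgebra.single (1 : ZMod N) (1 : ℤ) ^ i)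
      = ∑ i ∈ Finset.range (f.natDegree + 1),
        AddMonoidAlgebra.single ((i : ZMod N)) (f.coeff i) := by
    refine Finset.sum_congr rfl fun i _ => ?_
    rw [AddMonoidAlgebra.single_pow, one_pow]
    have h1 : (i • (1 : ZMod N)) = (i : ZMod N) := by simp [nsmul_eq_mul]
    rw [h1]
    ext a
    simp [Finsupp.smul_single, Finsupp.single_apply]
  rw [hsum, AddMonoidAlgebra.coeff_sum, Finset.sum_apply']
  have : ∀ i ∈ Finset.range (f.natDegree + 1),
      (AddMonoidAlgebra.single ((i : ZMod N)) (f.coeff i)).coeff t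
        = if i = t.val then f.coeff i else 0 := by
    intro i hi
    rw [Finset.mem_range] at hi
    have hiN : i < N := lt_of_lt_of_le hi (Nat.succ_le_of_lt hf)
    rw [AddMonoidAlgebra.coeff_single, Finsupp.single_apply]
    congr 1
    simp only [eq_iff_iff]
    constructor
    · intro h
      have := ZMod.val_cast_of_lt hiN
      rw [h] at this
      exact this.symm
    · intro h
      rw [h, ZMod.natCast_zmod_val]
  rw [Finset.sum_congr rfl this]
  rw [Finset.sum_ite_eq' (Finset.range (f.natDegree + 1)) t.val (fun i => f.coeff i)]
  split_ifs with h
  · rfl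
  · rw [Finset.mem_range, not_lt] at h
    exact (Polynomial.coeff_eq_zero_of_natDegree_lt h).symm

/-- `Φ_q` divides `∑_{j<q} X^{j·d}` when `gcd(d,q)=1`. -/
lemma cyclotomic_dvd_shifted_geom_sum (q d : ℕ) (hq : q.Prime) (hco : d.Coprime q) :
    cyclotomic q ℤ ∣ ∑ j ∈ Finset.range q, (X : ℤ[X]) ^ (j * d) := by
  haveI : Fact q.Prime := ⟨hq⟩
  haveI : NeZero q := ⟨hq.ne_zero⟩
  have hdvd1 : cyclotomic q ℤ ∣ X ^ q - 1 := cyclotomic.dvd_X_pow_sub_one q ℤ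
  -- each term is congruent to X^{(j*d) % q} mod Φ_q
  have hstep : ∀ j : ℕ, cyclotomic q ℤ ∣ ((X : ℤ[X]) ^ (j * d) - X ^ ((j * d) % q)) := by
    intro j
    have hexp : (X : ℤ[X]) ^ (j * d) - X ^ ((j * d) % q)
        = X ^ ((j * d) % q) * ((X ^ q) ^ ((j * d) / q) - 1) := by
      rw [mul_sub, mul_one, ← pow_mul, ← pow_add]
      rw [Nat.mod_add_div (j * d) q]
    rw [hexp]
    refine Dvd.dvd.mul_left (hdvd1.trans ?_) _
    simpa using sub_dvd_pow_sub_pow ((X : ℤ[X]) ^ q) 1 ((j * d) / q)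
  -- the reduced exponents are a permutation of range q
  have hperm : ∑ j ∈ Finset.range q, (X : ℤ[X]) ^ ((j * d) % q)
      = ∑ i ∈ Finset.range q, (X : ℤ[X]) ^ i := by
    have hunit : IsUnit ((d : ZMod q)) := (ZMod.isUnit_iff_coprime d q).mpr hco
    set e : ℕ := ((d : ZMod q)⁻¹).val with he
    have hde : ((d : ZMod q)) * ((e : ZMod q)) = 1 := by
      rw [he, ZMod.natCast_zmod_val]
      exact ZMod.mul_inv_of_unit _ hunit
    have key : ∀ x y : ℕ, ((x : ZMod q)) * ((y : ZMod q)) = 1 →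
        ∀ a : ℕ, a < q → ((a * x) % q) * y % q = a := by
      intro x y hxy a ha
      have h1 : ((((a * x) % q) * y % q : ℕ) : ZMod q) = ((a : ℕ) : ZMod q) := by
        rw [ZMod.natCast_mod, Nat.cast_mul, ZMod.natCast_mod, Nat.cast_mul]
        rw [mul_assoc, hxy, mul_one]
      have h2 : ((a * x) % q) * y % q < q := Nat.mod_lt _ hq.pos
      have := congrArg ZMod.val h1
      rwa [ZMod.val_cast_of_lt h2, ZMod.val_cast_of_lt ha] at this
    refine Finset.sum_nbij' (fun j => (j * d) % q) (fun i => (i * e) % q) ?_ ?_ ?_ ?_ ?_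
    · intro a _; exact Finset.mem_range.mpr (Nat.mod_lt _ hq.pos)
    · intro a _; exact Finset.mem_range.mpr (Nat.mod_lt _ hq.pos)
    · intro a ha; exact key d e hde a (Finset.mem_range.mp ha)
    · intro a ha
      exact key e d (by rw [mul_comm]; exact hde) a (Finset.mem_range.mp ha)
    · intro a _; rfl
  have hsplit : ∑ j ∈ Finset.range q, (X : ℤ[X]) ^ (j * d)
      = (∑ j ∈ Finset.range q, ((X : ℤ[X]) ^ (j * d) - X ^ ((j * d) % q)))
        + ∑ j ∈ Finset.range q, (X : ℤ[X]) ^ ((j * d) % q) := by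
    rw [← Finset.sum_add_distrib]
    refine Finset.sum_congr rfl fun j _ => ?_
    ring
  rw [hsplit, hperm, ← cyclotomic_prime ℤ q]
  exact dvd_add (Finset.dvd_sum fun j _ => hstep j) dvd_rfl

/-- The key divisibility. -/
lemma key_dvd (p q d : ℕ) (hp : p.Prime) (hq : q.Prime) (hne : p ≠ q)
    (hco : d.Coprime q) :
    (X ^ (p * q) - 1 : ℤ[X]) ∣
      cyclotomic (p * q) ℤ * (∑ m ∈ Finset.range p, X ^ (m * d)) * (1 - X ^ (q * d)) := by
  haveI : Fact q.Prime := ⟨hq⟩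
  -- Factorization of X^{pq} - 1
  have hfac : (X ^ (p * q) - 1 : ℤ[X])
      = (X ^ p - 1) * (cyclotomic (p * q) ℤ * cyclotomic q ℤ) := by
    have hexp := cyclotomic_expand_eq_cyclotomic_mul (R := ℤ) hp
      (fun h => hne ((Nat.prime_dvd_prime_iff_eq hp hq).mp h))
    have h1 : (expand ℤ p) (cyclotomic q ℤ) = ∑ i ∈ Finset.range q, (X : ℤ[X]) ^ (p * i) := by
      rw [cyclotomic_prime ℤ q, map_sum]
      refine Finset.sum_congr rfl fun i _ => ?_
      rw [map_pow, expand_X, ← pow_mul]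
    have h2 : (X ^ p - 1 : ℤ[X]) * ∑ i ∈ Finset.range q, (X : ℤ[X]) ^ (p * i)
        = X ^ (p * q) - 1 := by
      have : ∀ i : ℕ, (X : ℤ[X]) ^ (p * i) = (X ^ p) ^ i := fun i => by rw [← pow_mul]
      simp_rw [this]
      rw [mul_geom_sum, ← pow_mul]
    rw [← h2, ← h1, hexp, mul_comm q p]
  rw [hfac]
  -- rearrange the product
  have hrearr : cyclotomic (p * q) ℤ * (∑ m ∈ Finset.range p, (X : ℤ[X]) ^ (m * d))
        * (1 - X ^ (q * d))
      = cyclotomic (p * q) ℤ * (1 - X ^ (p * d))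
        * (∑ j ∈ Finset.range q, (X : ℤ[X]) ^ (j * d)) := by
    have hgs : ∀ n : ℕ, (∑ m ∈ Finset.range n, (X : ℤ[X]) ^ (m * d)) * (X ^ d - 1)
        = X ^ (n * d) - 1 := by
      intro n
      have : ∀ m : ℕ, (X : ℤ[X]) ^ (m * d) = (X ^ d) ^ m := fun m => by
        rw [← pow_mul, mul_comm]
      simp_rw [this]
      rw [geom_sum_mul, ← pow_mul, mul_comm d n]
    have e1 := hgs p
    have e2 := hgs q
    -- (∑_p)(1 - X^{qd}) = -(∑_p)(X^d-1)(∑_q) = (1 - X^{pd})(∑_q)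
    have : (∑ m ∈ Finset.range p, (X : ℤ[X]) ^ (m * d)) * (1 - X ^ (q * d))
        = (1 - X ^ (p * d)) * (∑ j ∈ Finset.range q, (X : ℤ[X]) ^ (j * d)) := by
      have : (1 - (X : ℤ[X]) ^ (q * d)) = -((∑ j ∈ Finset.range q, (X : ℤ[X]) ^ (j * d))
          * (X ^ d - 1)) := by rw [e2]; ring
      rw [this]
      have : (∑ m ∈ Finset.range p, (X : ℤ[X]) ^ (m * d)) * (X ^ d - 1) = X ^ (p * d) - 1 :=
        e1
      calc (∑ m ∈ Finset.range p, (X : ℤ[X]) ^ (m * d)) *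
            -((∑ j ∈ Finset.range q, (X : ℤ[X]) ^ (j * d)) * (X ^ d - 1))
          = -((∑ m ∈ Finset.range p, (X : ℤ[X]) ^ (m * d)) * (X ^ d - 1))
            * (∑ j ∈ Finset.range q, (X : ℤ[X]) ^ (j * d)) := by ring
        _ = _ := by rw [this]; ring
    rw [mul_assoc, this, ← mul_assoc]
  rw [hrearr]
  have d1 : (X ^ p - 1 : ℤ[X]) ∣ (1 - X ^ (p * d)) := by
    have : (X ^ p - 1 : ℤ[X]) ∣ (X ^ (p * d) - 1) := by
      have := sub_dvd_pow_sub_pow ((X : ℤ[X]) ^ p) 1 d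
      simpa [← pow_mul] using this
    have := this.neg_right
    simpa [neg_sub] using this
  have d2 : cyclotomic q ℤ ∣ ∑ j ∈ Finset.range q, (X : ℤ[X]) ^ (j * d) :=
    cyclotomic_dvd_shifted_geom_sum q d hq hco
  calc (X ^ p - 1 : ℤ[X]) * (cyclotomic (p * q) ℤ * cyclotomic q ℤ)
      = (X ^ p - 1) * cyclotomic q ℤ * cyclotomic (p * q) ℤ := by ring
    _ ∣ (1 - X ^ (p * d)) * (∑ j ∈ Finset.range q, (X : ℤ[X]) ^ (j * d))
          * cyclotomic (p * q) ℤ := mul_dvd_mul (mul_dvd_mul d1 d2) dvd_rfl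
    _ = cyclotomic (p * q) ℤ * (1 - X ^ (p * d))
          * (∑ j ∈ Finset.range q, (X : ℤ[X]) ^ (j * d)) := by ring

end Aux

/-- with `F m` the unique integer with `0 ≤ F m < pq` and
`r·F m ≡ k - m (mod pq)`, one has
`∑_{m=0}^{p-1} a_{pq}(F m) = ∑_{m=0}^{p-1} a_{pq}(F (m+q))`. -/
theorem stmt4 (p q r : ℕ) (hp : p.Prime) (hq : q.Prime) (hr : r.Prime)
    (h2p : 2 < p) (hpq : p < q) (hqr : q < r) (k : ℕ) (F : ℕ → ℕ)
    (hFlt : ∀ m : ℕ, F m < p * q)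
    (hFcong : ∀ m : ℕ, (r : ℤ) * (F m : ℤ) ≡ (k : ℤ) - (m : ℤ) [ZMOD (p * q : ℕ)]) :
    ∑ m ∈ Finset.range p, cyclCoeff (p * q) (F m) =
      ∑ m ∈ Finset.range p, cyclCoeff (p * q) (F (m + q)) := by
  classical
  set N := p * q with hN
  haveI : NeZero N := ⟨Nat.mul_ne_zero hp.ne_zero hq.ne_zero⟩
  have hpne : p ≠ q := hpq.ne
  have hrp : r ≠ p := (lt_trans hpq hqr).ne'
  have hrq : r ≠ q := hqr.ne'
  have hcop : r.Coprime N := Nat.Coprime.mul_right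
    ((Nat.coprime_primes hr hp).mpr hrp) ((Nat.coprime_primes hr hq).mpr hrq)
  set u : ZMod N := (r : ZMod N)⁻¹ with hu
  have hru : (r : ZMod N) * u = 1 := ZMod.coe_mul_inv_eq_one r hcop
  have hUnit : IsUnit u := IsUnit.of_mul_eq_one (r : ZMod N) (by rw [mul_comm]; exact hru)
  set d : ℕ := u.val with hd
  have hdu : ((d : ℕ) : ZMod N) = u := ZMod.natCast_zmod_val u
  have hdcopN : d.Coprime N := by
    rw [← ZMod.isUnit_iff_coprime, hdu]; exact hUnit
  have hdq : d.Coprime q := Nat.Coprime.coprime_dvd_right (dvd_mul_left q p) hdcopN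
  have hFval : ∀ m : ℕ, ((F m : ℕ) : ZMod N) = u * ((k : ZMod N) - (m : ZMod N)) := by
    intro m
    have h0 := (ZMod.intCast_eq_intCast_iff _ _ _).mpr (hFcong m)
    push_cast at h0
    calc ((F m : ℕ) : ZMod N) = 1 * ((F m : ℕ) : ZMod N) := (one_mul _).symm
      _ = (u * (r : ZMod N)) * ((F m : ℕ) : ZMod N) := by rw [mul_comm u, hru]
      _ = u * ((r : ZMod N) * ((F m : ℕ) : ZMod N)) := by ring
      _ = u * ((k : ZMod N) - (m : ZMod N)) := by rw [h0]
  set B := piGA N (cyclotomic N ℤ) with hB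
  have hdeg : (cyclotomic N ℤ).natDegree < N := by
    rw [natDegree_cyclotomic]
    refine Nat.totient_lt N ?_
    show 1 < p * q
    nlinarith [hp.two_le, hq.two_le]
  have hBapp : ∀ t : ZMod N, B.coeff t = cyclCoeff N t.val := fun t => piGA_apply N _ hdeg t
  set P := piGA N (∑ m ∈ Finset.range p, X ^ (m * d)) with hP
  have hPsum : P = ∑ m ∈ Finset.range p,
      AddMonoidAlgebra.single ((m : ZMod N) * u) (1 : ℤ) := by
    rw [hP, map_sum]
    refine Finset.sum_congr rfl fun m _ => ?_
    rw [piGA_X_pow]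
    congr 1
    rw [Nat.cast_mul, hdu]
  have hBP : ∀ s : ZMod N, (B * P).coeff s = ∑ m ∈ Finset.range p, B.coeff (s - (m : ZMod N) * u) := by
    intro s
    rw [hPsum, Finset.mul_sum, AddMonoidAlgebra.coeff_sum, Finset.sum_apply']
    refine Finset.sum_congr rfl fun m _ => ?_
    rw [AddMonoidAlgebra.coeff_mul_single_apply, mul_one, ← sub_eq_add_neg]
  have hzero : B * P * (1 - AddMonoidAlgebra.single ((q : ZMod N) * u) (1 : ℤ)) = 0 := by
    have hdvd := key_dvd p q d hp hq hpne hdq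
    have h := piGA_dvd N _ hdvd
    rw [map_mul, map_mul, map_sub, map_one, piGA_X_pow] at h
    have hc : ((q * d : ℕ) : ZMod N) = (q : ZMod N) * u := by rw [Nat.cast_mul, hdu]
    rw [hc] at h
    exact h
  have hkey : B * P = (B * P) * AddMonoidAlgebra.single ((q : ZMod N) * u) (1 : ℤ) := by
    rw [mul_sub, mul_one] at hzero
    exact sub_eq_zero.mp hzero
  have hc1 : ∀ m ∈ Finset.range p,
      cyclCoeff N (F m) = B.coeff (u * (k : ZMod N) - (m : ZMod N) * u) := by
    intro m _
    have h1 : ((F m : ℕ) : ZMod N).val = F m := ZMod.val_cast_of_lt (hFlt m)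
    rw [← h1, ← hBapp]
    congr 1
    rw [hFval m]; ring
  have hc2 : ∀ m ∈ Finset.range p,
      cyclCoeff N (F (m + q))
        = B.coeff ((u * (k : ZMod N) - (q : ZMod N) * u) - (m : ZMod N) * u) := by
    intro m _
    have h1 : ((F (m + q) : ℕ) : ZMod N).val = F (m + q) := ZMod.val_cast_of_lt (hFlt _)
    rw [← h1, ← hBapp]
    congr 1
    rw [hFval (m + q)]
    push_cast
    ring
  rw [Finset.sum_congr rfl hc1, Finset.sum_congr rfl hc2,
    ← hBP (u * (k : ZMod N)), ← hBP (u * (k : ZMod N) - (q : ZMod N) * u)]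
  conv_lhs => rw [hkey]
  rw [AddMonoidAlgebra.coeff_mul_single_apply, mul_one, ← sub_eq_add_neg]
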